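/- arXiv:2110.07669 — 3 statements merged into one kernel-verified Lean document; each statement's English description precedes it below -/
import Mathlib

section
/- Let F be a family of holomorphic (or meromorphic) functions on the unit disc D, each extending continuously to the closed disc, and suppose F is not normal at 0, i.e., there exist f_n ∈ F and w_n → 0 with f_n^#(w_n) → ∞, where f^#(z) = |f'(z)|/(1 + |f(z)|²) is the spherical derivative. Define z_n to be a point maximizing z ↦ (1 - |z|) f_n^#(z) on the closed unit disc, and r_n = 1/f_n^#(z_n). Then r_n = o(1 - |z_n|) as n → ∞. -/
open Filter Metric

/-- The spherical derivative `f^#(z) = |f'(z)|/(1+|f(z)|²)`. -/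
noncomputable def sphDeriv (f : ℂ → ℂ) (z : ℂ) : ℝ :=
  ‖deriv f z‖ / (1 + ‖f z‖ ^ 2)

/-- Key estimate in the proof of Zalcman's lemma: if `f_n` are holomorphic on a
neighbourhood of the closed unit disc, `w_n → 0` with `f_n^#(w_n) → ∞`, and `z_n`
maximizes `(1-|z|) f_n^#(z)` on the closed unit disc, `r_n = 1/f_n^#(z_n)`, then
`r_n = o(1 - |z_n|)`. -/
theorem zalcman_rescaling_small (f : ℕ → ℂ → ℂ)
    (hf : ∀ n, DifferentiableOn ℂ (f n) (closedBall (0 : ℂ) 1))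
    (w : ℕ → ℂ) (hw1 : ∀ n, w n ∈ closedBall (0 : ℂ) 1)
    (hw0 : Tendsto w atTop (nhds 0))
    (hwsharp : Tendsto (fun n => sphDeriv (f n) (w n)) atTop atTop)
    (z : ℕ → ℂ) (hz1 : ∀ n, z n ∈ closedBall (0 : ℂ) 1)
    (hzmax : ∀ n, ∀ x ∈ closedBall (0 : ℂ) 1,
      (1 - ‖x‖) * sphDeriv (f n) x ≤ (1 - ‖z n‖) * sphDeriv (f n) (z n))
    (r : ℕ → ℝ) (hr : ∀ n, r n = 1 / sphDeriv (f n) (z n)) :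
    Tendsto (fun n => r n / (1 - ‖z n‖)) atTop (nhds 0) := by
  have hnorm : Tendsto (fun n => 1 - ‖w n‖) atTop (nhds 1) := by
    have : Tendsto (fun n => ‖w n‖) atTop (nhds (‖(0 : ℂ)‖)) := hw0.norm
    simpa using (tendsto_const_nhds (x := (1 : ℝ))).sub this
  have hlow : Tendsto (fun n => (1 - ‖w n‖) * sphDeriv (f n) (w n)) atTop atTop :=
    hnorm.pos_mul_atTop one_pos hwsharp
  have hM : Tendsto (fun n => (1 - ‖z n‖) * sphDeriv (f n) (z n)) atTop atTop :=
    tendsto_atTop_mono (fun n => hzmax n (w n) (hw1 n)) hlow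
  have hinv : Tendsto (fun n => ((1 - ‖z n‖) * sphDeriv (f n) (z n))⁻¹) atTop (nhds 0) :=
    hM.inv_tendsto_atTop
  have heq : (fun n => r n / (1 - ‖z n‖)) =
      fun n => ((1 - ‖z n‖) * sphDeriv (f n) (z n))⁻¹ := by
    funext n
    rw [hr n, div_div, one_div, mul_comm]
  rw [heq]
  exact hinv
end

section
/- A spherical geodesic triangle whose circumscribed radius is at most arccos(1/3) has area at most π. -/
open scoped RealInnerProductSpace

set_option maxHeartbeats 1000000

noncomputable section

/-- The geodesic (angular) distance between two points of the unit sphere in `ℝ³`. -/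
def sphDist (x y : EuclideanSpace ℝ (Fin 3)) : ℝ := Real.arccos ⟪x, y⟫

/-- The spherical angle at the vertex `A` of the spherical triangle `ABC`: the angle
between the tangent directions at `A` towards `B` and towards `C`. -/
def sphAngle (A B C : EuclideanSpace ℝ (Fin 3)) : ℝ :=
  InnerProductGeometry.angle (B - ⟪A, B⟫ • A) (C - ⟪A, C⟫ • A)

/-- The area of a spherical geodesic triangle, by Girard's formula (Gauss–Bonnet):
the angle sum minus `π`. -/
def sphTriangleArea (A B C : EuclideanSpace ℝ (Fin 3)) : ℝ :=
  sphAngle A B C + sphAngle B A C + sphAngle C A B - Real.pi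

/-- Key real-analytic lemma: if three angles in `[0, π]` satisfy the spherical
cosine formulas coming from inner products `p, q, r` with `1 + p + q + r ≥ 0`,
then they sum to at most `2π`. -/
lemma sum_angles_le_two_pi_aux (p q r α β γ : ℝ)
    (hp : p ^ 2 < 1) (hq : q ^ 2 < 1) (hr : r ^ 2 < 1)
    (hα0 : 0 ≤ α) (hαπ : α ≤ Real.pi) (hβ0 : 0 ≤ β) (hβπ : β ≤ Real.pi)
    (hγ0 : 0 ≤ γ) (hγπ : γ ≤ Real.pi)
    (hca : Real.cos α = (r - p * q) / (Real.sqrt (1 - p ^ 2) * Real.sqrt (1 - q ^ 2)))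
    (hcb : Real.cos β = (q - p * r) / (Real.sqrt (1 - p ^ 2) * Real.sqrt (1 - r ^ 2)))
    (hcc : Real.cos γ = (p - q * r) / (Real.sqrt (1 - q ^ 2) * Real.sqrt (1 - r ^ 2)))
    (hD : 0 ≤ 1 + p + q + r) :
    α + β + γ ≤ 2 * Real.pi := by
  by_cases hab : α + β ≤ Real.pi
  · linarith
  push_neg at hab
  set u := Real.sqrt (1 - p ^ 2) with hu
  set v := Real.sqrt (1 - q ^ 2) with hv
  set w := Real.sqrt (1 - r ^ 2) with hw
  have hu0 : 0 < u := Real.sqrt_pos.2 (by linarith)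
  have hv0 : 0 < v := Real.sqrt_pos.2 (by linarith)
  have hw0 : 0 < w := Real.sqrt_pos.2 (by linarith)
  have hu2 : u ^ 2 = 1 - p ^ 2 := Real.sq_sqrt (by linarith)
  have hv2 : v ^ 2 = 1 - q ^ 2 := Real.sq_sqrt (by linarith)
  have hw2 : w ^ 2 = 1 - r ^ 2 := Real.sq_sqrt (by linarith)
  have hpl : -1 < p := by nlinarith
  have hpu : p < 1 := by nlinarith
  have hql : -1 < q := by nlinarith
  have hqu : q < 1 := by nlinarith
  have hrl : -1 < r := by nlinarith
  have hru : r < 1 := by nlinarith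
  have hca' : Real.cos α * (u * v) = r - p * q := by
    rw [hca]; field_simp
  have hcb' : Real.cos β * (u * w) = q - p * r := by
    rw [hcb]; field_simp
  have hcc' : Real.cos γ * (v * w) = p - q * r := by
    rw [hcc]; field_simp
  -- First, show `1 + p - q - r ≥ 0`; otherwise both `cos α` and `cos β` would be
  -- positive, contradicting `α + β > π`.
  have h1 : 0 ≤ 1 + p - q - r := by
    by_contra h1
    push_neg at h1
    have h2 : 0 < r - p * q := by nlinarith
    have h3 : 0 < q - p * r := by nlinarith
    have hcapos : 0 < Real.cos α := by
      rw [hca]; exact div_pos h2 (mul_pos hu0 hv0)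
    have hcbpos : 0 < Real.cos β := by
      rw [hcb]; exact div_pos h3 (mul_pos hu0 hw0)
    have h4 : Real.cos β < Real.cos (Real.pi - α) :=
      Real.strictAntiOn_cos ⟨by linarith, by linarith⟩ ⟨hβ0, hβπ⟩ (by linarith)
    rw [Real.cos_pi_sub] at h4
    linarith
  -- the Gram determinant
  set G := 1 + 2 * p * q * r - p ^ 2 - q ^ 2 - r ^ 2 with hG
  have hsa0 : 0 ≤ Real.sin α * (u * v) :=
    mul_nonneg (Real.sin_nonneg_of_nonneg_of_le_pi hα0 hαπ) (by positivity)
  have hsb0 : 0 ≤ Real.sin β * (u * w) :=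
    mul_nonneg (Real.sin_nonneg_of_nonneg_of_le_pi hβ0 hβπ) (by positivity)
  have hpya : Real.sin α ^ 2 = 1 - Real.cos α ^ 2 := by
    nlinarith [Real.sin_sq_add_cos_sq α]
  have hpyb : Real.sin β ^ 2 = 1 - Real.cos β ^ 2 := by
    nlinarith [Real.sin_sq_add_cos_sq β]
  have hsa2 : (Real.sin α * (u * v)) ^ 2 = G := by
    calc (Real.sin α * (u * v)) ^ 2 = Real.sin α ^ 2 * (u ^ 2 * v ^ 2) := by ring
      _ = (1 - Real.cos α ^ 2) * (u ^ 2 * v ^ 2) := by rw [hpya]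
      _ = u ^ 2 * v ^ 2 - (Real.cos α * (u * v)) ^ 2 := by ring
      _ = (1 - p ^ 2) * (1 - q ^ 2) - (r - p * q) ^ 2 := by rw [hca', hu2, hv2]
      _ = G := by rw [hG]; ring
  have hsb2 : (Real.sin β * (u * w)) ^ 2 = G := by
    calc (Real.sin β * (u * w)) ^ 2 = Real.sin β ^ 2 * (u ^ 2 * w ^ 2) := by ring
      _ = (1 - Real.cos β ^ 2) * (u ^ 2 * w ^ 2) := by rw [hpyb]
      _ = u ^ 2 * w ^ 2 - (Real.cos β * (u * w)) ^ 2 := by ring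
      _ = (1 - p ^ 2) * (1 - r ^ 2) - (q - p * r) ^ 2 := by rw [hcb', hu2, hw2]
      _ = G := by rw [hG]; ring
  have hsab : Real.sin α * (u * v) = Real.sin β * (u * w) := by
    have e1 := Real.sqrt_sq hsa0
    have e2 := Real.sqrt_sq hsb0
    rw [← e1, ← e2, hsa2, hsb2]
  have e_ss : Real.sin α * Real.sin β * (u ^ 2 * (v * w)) = G := by
    calc Real.sin α * Real.sin β * (u ^ 2 * (v * w))
        = (Real.sin α * (u * v)) * (Real.sin β * (u * w)) := by ring
      _ = (Real.sin α * (u * v)) ^ 2 := by rw [hsab]; ring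
      _ = G := hsa2
  have e_c : Real.cos γ * (u ^ 2 * (v * w)) = (p - q * r) * u ^ 2 := by
    calc Real.cos γ * (u ^ 2 * (v * w)) = (Real.cos γ * (v * w)) * u ^ 2 := by ring
      _ = (p - q * r) * u ^ 2 := by rw [hcc']
  have e_cc : Real.cos α * Real.cos β * (u ^ 2 * (v * w)) = (r - p * q) * (q - p * r) := by
    calc Real.cos α * Real.cos β * (u ^ 2 * (v * w))
        = (Real.cos α * (u * v)) * (Real.cos β * (u * w)) := by ring
      _ = (r - p * q) * (q - p * r) := by rw [hca', hcb']
  have key : (Real.cos γ - (Real.cos α * Real.cos β - Real.sin α * Real.sin β)) *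
      (u ^ 2 * (v * w)) = (1 - p) * (1 + p + q + r) * (1 + p - q - r) := by
    have expand : (Real.cos γ - (Real.cos α * Real.cos β - Real.sin α * Real.sin β)) *
        (u ^ 2 * (v * w)) = (p - q * r) * u ^ 2 - (r - p * q) * (q - p * r) + G := by
      rw [← e_c, ← e_cc, ← e_ss]; ring
    rw [expand, hu2, hG]; ring
  have hprod : 0 ≤ (1 - p) * (1 + p + q + r) * (1 + p - q - r) := by
    apply mul_nonneg (mul_nonneg (by linarith) hD) h1
  have hpos : 0 < u ^ 2 * (v * w) := by positivity
  have hfin : Real.cos (α + β) ≤ Real.cos γ := by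
    have h5 : 0 ≤ Real.cos γ - (Real.cos α * Real.cos β - Real.sin α * Real.sin β) :=
      (mul_nonneg_iff_of_pos_right hpos).mp (key ▸ hprod)
    rw [Real.cos_add]; linarith
  -- conclude
  have hδcos : Real.cos (2 * Real.pi - (α + β)) = Real.cos (α + β) := by
    rw [Real.cos_sub]; simp
  by_contra hcon
  push_neg at hcon
  have hδγ : 2 * Real.pi - (α + β) < γ := by linarith
  have h6 : Real.cos γ < Real.cos (2 * Real.pi - (α + β)) :=
    Real.strictAntiOn_cos ⟨by linarith, by linarith⟩ ⟨hγ0, hγπ⟩ hδγ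
  rw [hδcos] at h6
  linarith

lemma tang_inner (A B C : EuclideanSpace ℝ (Fin 3)) (hA : ‖A‖ = 1) :
    ⟪B - ⟪A, B⟫ • A, C - ⟪A, C⟫ • A⟫ = ⟪B, C⟫ - ⟪A, B⟫ * ⟪A, C⟫ := by
  have hAA : ⟪A, A⟫ = (1 : ℝ) := by
    rw [real_inner_self_eq_norm_sq, hA]; norm_num
  simp only [inner_sub_left, inner_sub_right, real_inner_smul_left, real_inner_smul_right, hAA]
  rw [real_inner_comm A B]
  ring

lemma tang_norm (A B : EuclideanSpace ℝ (Fin 3)) (hA : ‖A‖ = 1) (hB : ‖B‖ = 1) :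
    ‖B - ⟪A, B⟫ • A‖ = Real.sqrt (1 - ⟪A, B⟫ ^ 2) := by
  have h1 : ‖B - ⟪A, B⟫ • A‖ ^ 2 = 1 - ⟪A, B⟫ ^ 2 := by
    rw [← real_inner_self_eq_norm_sq, tang_inner A B B hA]
    have hBB : ⟪B, B⟫ = (1 : ℝ) := by
      rw [real_inner_self_eq_norm_sq, hB]; norm_num
    rw [hBB]; ring
  rw [← Real.sqrt_sq (norm_nonneg _), h1]

lemma tang_eq_zero (A B : EuclideanSpace ℝ (Fin 3)) (hA : ‖A‖ = 1) (hB : ‖B‖ = 1)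
    (h : ⟪A, B⟫ ^ 2 = 1) : B - ⟪A, B⟫ • A = 0 := by
  have h1 : ‖B - ⟪A, B⟫ • A‖ ^ 2 = 1 - ⟪A, B⟫ ^ 2 := by
    rw [← real_inner_self_eq_norm_sq, tang_inner A B B hA]
    have hBB : ⟪B, B⟫ = (1 : ℝ) := by
      rw [real_inner_self_eq_norm_sq, hB]; norm_num
    rw [hBB]; ring
  rw [h] at h1
  have : ‖B - ⟪A, B⟫ • A‖ = 0 := by nlinarith [norm_nonneg (B - ⟪A, B⟫ • A)]
  exact norm_eq_zero.mp this

lemma cos_sphAngle (A B C : EuclideanSpace ℝ (Fin 3)) (hA : ‖A‖ = 1) (hB : ‖B‖ = 1)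
    (hC : ‖C‖ = 1) :
    Real.cos (sphAngle A B C) = (⟪B, C⟫ - ⟪A, B⟫ * ⟪A, C⟫) /
      (Real.sqrt (1 - ⟪A, B⟫ ^ 2) * Real.sqrt (1 - ⟪A, C⟫ ^ 2)) := by
  rw [sphAngle, InnerProductGeometry.cos_angle, tang_inner A B C hA,
    tang_norm A B hA hB, tang_norm A C hA hC]

/-- A spherical geodesic triangle on the unit sphere whose circumscribed radius is at
most `arccos(1/3)` has area at most `π`. -/
theorem area_le_pi_of_circumradius_le_arccos_third
    (A B C : EuclideanSpace ℝ (Fin 3))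
    (hA : ‖A‖ = 1) (hB : ‖B‖ = 1) (hC : ‖C‖ = 1)
    (hcirc : ∃ O : EuclideanSpace ℝ (Fin 3), ‖O‖ = 1 ∧
      sphDist O A ≤ Real.arccos (1/3) ∧ sphDist O B ≤ Real.arccos (1/3) ∧
      sphDist O C ≤ Real.arccos (1/3)) :
    sphTriangleArea A B C ≤ Real.pi := by
  obtain ⟨O, hO, hOA, hOB, hOC⟩ := hcirc
  -- inner products are at least 1/3
  have key13 : ∀ X : EuclideanSpace ℝ (Fin 3), ‖X‖ = 1 →
      sphDist O X ≤ Real.arccos (1/3) → (1:ℝ)/3 ≤ ⟪O, X⟫ := by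
    intro X hX hdist
    have hb : |⟪O, X⟫| ≤ 1 := by
      have := abs_real_inner_le_norm O X
      rwa [hO, hX, one_mul] at this
    have hb1 := abs_le.mp hb
    have h1 : Real.cos (Real.arccos (1/3)) ≤ Real.cos (sphDist O X) :=
      Real.cos_le_cos_of_nonneg_of_le_pi (Real.arccos_nonneg _) (Real.arccos_le_pi _) hdist
    rw [Real.cos_arccos (by norm_num) (by norm_num)] at h1
    rw [sphDist, Real.cos_arccos hb1.1 hb1.2] at h1
    exact h1
  have h13A := key13 A hA hOA
  have h13B := key13 B hB hOB
  have h13C := key13 C hC hOC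
  -- the crucial inequality 1 + p + q + r ≥ 0
  have hsum : (1:ℝ) ≤ ⟪O, A + B + C⟫ := by
    rw [inner_add_right, inner_add_right]
    linarith
  have hCS : ⟪O, A + B + C⟫ ≤ ‖A + B + C‖ := by
    have := real_inner_le_norm O (A + B + C)
    rwa [hO, one_mul] at this
  have hnormsq : ‖A + B + C‖ ^ 2 = 3 + 2 * (⟪A, B⟫ + ⟪A, C⟫ + ⟪B, C⟫) := by
    rw [← real_inner_self_eq_norm_sq]
    simp only [inner_add_left, inner_add_right]
    have hAA : ⟪A, A⟫ = (1 : ℝ) := by rw [real_inner_self_eq_norm_sq, hA]; norm_num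
    have hBB : ⟪B, B⟫ = (1 : ℝ) := by rw [real_inner_self_eq_norm_sq, hB]; norm_num
    have hCC : ⟪C, C⟫ = (1 : ℝ) := by rw [real_inner_self_eq_norm_sq, hC]; norm_num
    rw [hAA, hBB, hCC, real_inner_comm A B, real_inner_comm A C, real_inner_comm B C]
    ring
  have hD : 0 ≤ 1 + (⟪A, B⟫ + ⟪A, C⟫ + ⟪B, C⟫) := by
    have h1 : (1:ℝ) ≤ ‖A + B + C‖ := le_trans hsum hCS
    nlinarith [hnormsq]
  -- bounds on inner products
  have habs : ∀ X Y : EuclideanSpace ℝ (Fin 3), ‖X‖ = 1 → ‖Y‖ = 1 → ⟪X, Y⟫ ^ 2 ≤ 1 := by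
    intro X Y hX hY
    have := abs_real_inner_le_norm X Y
    rw [hX, hY, one_mul] at this
    nlinarith [abs_le.mp this, abs_nonneg ⟪X, Y⟫]
  have hple := habs A B hA hB
  have hqle := habs A C hA hC
  have hrle := habs B C hB hC
  rw [sphTriangleArea]
  have hα0 := InnerProductGeometry.angle_nonneg (B - ⟪A, B⟫ • A) (C - ⟪A, C⟫ • A)
  have hαπ := InnerProductGeometry.angle_le_pi (B - ⟪A, B⟫ • A) (C - ⟪A, C⟫ • A)
  have hβ0 := InnerProductGeometry.angle_nonneg (A - ⟪B, A⟫ • B) (C - ⟪B, C⟫ • B)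
  have hβπ := InnerProductGeometry.angle_le_pi (A - ⟪B, A⟫ • B) (C - ⟪B, C⟫ • B)
  have hγ0 := InnerProductGeometry.angle_nonneg (A - ⟪C, A⟫ • C) (B - ⟪C, B⟫ • C)
  have hγπ := InnerProductGeometry.angle_le_pi (A - ⟪C, A⟫ • C) (B - ⟪C, B⟫ • C)
  -- degenerate cases
  rcases lt_or_eq_of_le hple with hp | hp
  rotate_left
  · -- p² = 1 : angles at A and B are both π/2
    have hz1 : B - ⟪A, B⟫ • A = 0 := tang_eq_zero A B hA hB hp
    have hz2 : A - ⟪B, A⟫ • B = 0 := by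
      refine tang_eq_zero B A hB hA ?_
      rw [real_inner_comm]; exact hp
    have e1 : sphAngle A B C = Real.pi / 2 := by
      rw [sphAngle, hz1, InnerProductGeometry.angle_zero_left]
    have e2 : sphAngle B A C = Real.pi / 2 := by
      rw [sphAngle, hz2, InnerProductGeometry.angle_zero_left]
    rw [e1, e2]
    have : sphAngle C A B ≤ Real.pi := InnerProductGeometry.angle_le_pi _ _
    linarith
  rcases lt_or_eq_of_le hqle with hq | hq
  rotate_left
  · -- q² = 1 : angles at A and C are both π/2
    have hz1 : C - ⟪A, C⟫ • A = 0 := tang_eq_zero A C hA hC hq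
    have hz2 : A - ⟪C, A⟫ • C = 0 := by
      refine tang_eq_zero C A hC hA ?_
      rw [real_inner_comm]; exact hq
    have e1 : sphAngle A B C = Real.pi / 2 := by
      rw [sphAngle, hz1, InnerProductGeometry.angle_zero_right]
    have e2 : sphAngle C A B = Real.pi / 2 := by
      rw [sphAngle, hz2, InnerProductGeometry.angle_zero_left]
    rw [e1, e2]
    have : sphAngle B A C ≤ Real.pi := InnerProductGeometry.angle_le_pi _ _
    linarith
  rcases lt_or_eq_of_le hrle with hr | hr
  rotate_left
  · -- r² = 1 : angles at B and C are both π/2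
    have hz1 : C - ⟪B, C⟫ • B = 0 := tang_eq_zero B C hB hC hr
    have hz2 : B - ⟪C, B⟫ • C = 0 := by
      refine tang_eq_zero C B hC hB ?_
      rw [real_inner_comm]; exact hr
    have e1 : sphAngle B A C = Real.pi / 2 := by
      rw [sphAngle, hz1, InnerProductGeometry.angle_zero_right]
    have e2 : sphAngle C A B = Real.pi / 2 := by
      rw [sphAngle, hz2, InnerProductGeometry.angle_zero_right]
    rw [e1, e2]
    have : sphAngle A B C ≤ Real.pi := InnerProductGeometry.angle_le_pi _ _
    linarith
  -- nondegenerate case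
  have hca := cos_sphAngle A B C hA hB hC
  have hcb := cos_sphAngle B A C hB hA hC
  have hcc := cos_sphAngle C A B hC hA hB
  rw [real_inner_comm A B] at hcb
  rw [real_inner_comm A C, real_inner_comm B C] at hcc
  have main := sum_angles_le_two_pi_aux ⟪A, B⟫ ⟪A, C⟫ ⟪B, C⟫
    (sphAngle A B C) (sphAngle B A C) (sphAngle C A B)
    hp hq hr hα0 hαπ hβ0 hβπ hγ0 hγπ hca hcb hcc (by linarith)
  linarith

end
end

section
/- Let f be a nonconstant entire function with bounded spherical derivative: f^#(z) = |f'(z)|/(1+|f(z)|²) ≤ C for all z ∈ ℂ. Then f has order at most 1, normal type; precisely, log max_{|z|≤r} log(1 + |f(z)|) ≤ log r + O(1), i.e., log|f(z)| ≤ C'·|z| + O(1) for some constant C' depending on C. -/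
open Metric Set Complex intervalIntegral MeasureTheory

/-- A nonvanishing entire function has a holomorphic logarithm on any ball. -/
lemma CH.exists_log (f : ℂ → ℂ) (hf : Differentiable ℂ f) (p : ℂ) (R : ℝ)
    (hR : 0 < R) (hne : ∀ w ∈ ball p R, f w ≠ 0) :
    ∃ h : ℂ → ℂ, DifferentiableOn ℂ h (ball p R) ∧
      ∀ w ∈ ball p R, Complex.exp (h w) = f w := by
  have hfc : Continuous f := hf.continuous
  have hdc : Continuous (deriv f) := (hf.contDiff (n := 1)).continuous_deriv le_rfl
  set γ : ℂ → ℝ → ℂ := fun w t => p + t • (w - p) with hγ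
  set G : ℂ → ℝ → ℂ := fun w t => (w - p) * (deriv f (γ w t) / f (γ w t)) with hG
  set h : ℂ → ℂ := fun w => Complex.log (f p) + ∫ t in (0:ℝ)..1, G w t with hh
  have hγc : ∀ w, Continuous (γ w) := fun w =>
    continuous_const.add (continuous_id.smul continuous_const)
  have hmem : ∀ w ∈ ball p R, ∀ t ∈ Icc (0:ℝ) 1, γ w t ∈ ball p R := by
    intro w hw t ht
    simp only [hγ, mem_ball, dist_eq_norm, add_sub_cancel_left] at hw ⊢
    rw [norm_smul, Real.norm_eq_abs, _root_.abs_of_nonneg ht.1]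
    calc t * ‖w - p‖ ≤ 1 * ‖w - p‖ :=
          mul_le_mul_of_nonneg_right ht.2 (norm_nonneg _)
      _ < R := by rwa [one_mul]
  have hUopen : ∀ w, IsOpen {t : ℝ | γ w t ∈ ball p R} := fun w =>
    isOpen_ball.preimage (hγc w)
  have hGcont : ∀ w, ContinuousOn (G w) {t : ℝ | γ w t ∈ ball p R} := by
    intro w
    exact continuousOn_const.mul
      (((hdc.comp (hγc w)).continuousOn.div (hfc.comp (hγc w)).continuousOn)
        (fun t ht => hne _ ht))
  -- the key identity exp (h w) = f w
  have hexp : ∀ w ∈ ball p R, Complex.exp (h w) = f w := by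
    intro w hw
    set F : ℝ → ℂ := fun u => ∫ t in (0:ℝ)..u, G w t with hF
    have hsub : Icc (0:ℝ) 1 ⊆ {t : ℝ | γ w t ∈ ball p R} := fun t ht => hmem w hw t ht
    have hFd : ∀ t ∈ Icc (0:ℝ) 1, HasDerivAt F (G w t) t := by
      intro t ht
      refine intervalIntegral.integral_hasDerivAt_right ?_ ?_ ?_
      · refine ((hGcont w).mono (Set.Subset.trans ?_ hsub)).intervalIntegrable
        rw [Set.uIcc_of_le ht.1]
        exact Icc_subset_Icc le_rfl ht.2
      · exact ContinuousOn.stronglyMeasurableAtFilter (hUopen w) (hGcont w) t (hsub ht)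
      · exact (hGcont w).continuousAt ((hUopen w).mem_nhds (hsub ht))
    have hγd : ∀ t : ℝ, HasDerivAt (γ w) (w - p) t := by
      intro t
      have h1 : HasDerivAt (fun t : ℝ => t • (w - p)) ((1:ℝ) • (w - p)) t :=
        (hasDerivAt_id t).smul_const (w - p)
      simpa [hγ] using h1.const_add p
    have hfγ : ∀ t : ℝ, HasDerivAt (fun s : ℝ => f (γ w s)) ((w - p) • deriv f (γ w t)) t :=
      fun t => ((hf (γ w t)).hasDerivAt).scomp t (hγd t)
    set ψ : ℝ → ℂ := fun s => Complex.exp (-F s) * f (γ w s) with hψdef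
    have hψ : ∀ t ∈ Icc (0:ℝ) 1, HasDerivAt ψ 0 t := by
      intro t ht
      have h1 : HasDerivAt (fun s => Complex.exp (-F s))
          (Complex.exp (-F t) * -G w t) t := ((hFd t ht).neg).cexp
      have h2 := h1.mul (hfγ t)
      refine h2.congr_deriv ?_
      symm
      have hfne : f (γ w t) ≠ 0 := hne _ (hmem w hw t ht)
      have key : G w t * f (γ w t) = (w - p) * deriv f (γ w t) := by
        rw [hG]
        field_simp
      rw [smul_eq_mul]
      linear_combination Complex.exp (-F t) * key
    have hcst := norm_image_sub_le_of_norm_deriv_le_segment'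
      (C := 0) (f' := fun _ : ℝ => (0:ℂ)) (fun t ht => (hψ t ht).hasDerivWithinAt)
      (fun t _ => by simp) 1 (right_mem_Icc.2 zero_le_one)
    have hψeq : ψ 1 = ψ 0 := by
      have h1 : ‖ψ 1 - ψ 0‖ ≤ 0 := by simpa using hcst
      have h2 := le_antisymm h1 (norm_nonneg _)
      rwa [norm_eq_zero, sub_eq_zero] at h2
    have hγ1 : γ w 1 = w := by simp [hγ]
    have hψ0 : ψ 0 = f p := by simp [hψdef, hF, hγ]
    have hψ1 : Complex.exp (-F 1) * f w = f p := by
      rw [← hγ1, ← hψ0]; exact hψeq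
    have hsplit : Complex.exp (h w) = Complex.exp (Complex.log (f p)) * Complex.exp (F 1) := by
      rw [hh, Complex.exp_add]
    rw [hsplit, Complex.exp_log (hne p (mem_ball_self hR))]
    calc f p * Complex.exp (F 1) = (Complex.exp (-F 1) * f w) * Complex.exp (F 1) := by
          rw [hψ1]
      _ = f w := by rw [mul_comm, ← mul_assoc, ← Complex.exp_add]; simp
  -- continuity of h on the ball
  have hcont : ∀ w₀ ∈ ball p R, ContinuousAt h w₀ := by
    intro w₀ hw₀
    apply ContinuousAt.add continuousAt_const
    set ρ := (R - dist w₀ p) / 2 with hρ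
    have hw₀R : dist w₀ p < R := mem_ball.mp hw₀
    have hρpos : 0 < ρ := by simp only [hρ]; linarith
    have hcb : closedBall w₀ ρ ⊆ ball p R := by
      intro z hz
      have h1 : dist z w₀ ≤ ρ := mem_closedBall.mp hz
      have h2 := dist_triangle z w₀ p
      rw [mem_ball]
      simp only [hρ] at h1
      linarith
    set S : Set (ℂ × ℝ) := closedBall w₀ ρ ×ˢ Icc (0:ℝ) 1 with hS
    have hSc : IsCompact S := (isCompact_closedBall _ _).prod isCompact_Icc
    set Φ : ℂ × ℝ → ℂ := fun x => G x.1 x.2 with hΦ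
    have hγS : ∀ x ∈ S, γ x.1 x.2 ∈ ball p R := fun x hx =>
      hmem x.1 (hcb hx.1) x.2 hx.2
    have hγc2 : Continuous fun x : ℂ × ℝ => γ x.1 x.2 := by
      simp only [hγ]
      exact continuous_const.add (continuous_snd.smul (continuous_fst.sub continuous_const))
    have hΦc : ContinuousOn Φ S := by
      exact (continuous_fst.sub continuous_const).continuousOn.mul
        (((hdc.comp hγc2).continuousOn.div (hfc.comp hγc2).continuousOn)
          (fun x hx => hne _ (hγS x hx)))
    obtain ⟨M, hM⟩ := hSc.exists_bound_of_continuousOn hΦc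
    have hIoc : Set.uIoc (0:ℝ) 1 = Ioc 0 1 := uIoc_of_le zero_le_one
    have hevcb : ∀ᶠ w in nhds w₀, w ∈ closedBall w₀ ρ := Metric.closedBall_mem_nhds w₀ hρpos
    apply intervalIntegral.continuousAt_of_dominated_interval (bound := fun _ => M)
    · filter_upwards [hevcb] with w hwcb
      apply ContinuousOn.aestronglyMeasurable _ measurableSet_uIoc
      refine (hGcont w).mono ?_
      rw [hIoc]
      intro t ht
      exact hmem w (hcb hwcb) t (Ioc_subset_Icc_self ht)
    · filter_upwards [hevcb] with w hwcb
      refine Filter.Eventually.of_forall fun t ht => ?_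
      rw [hIoc] at ht
      exact hM (w, t) ⟨hwcb, Ioc_subset_Icc_self ht⟩
    · exact intervalIntegrable_const
    · refine Filter.Eventually.of_forall fun t ht => ?_
      rw [hIoc] at ht
      have htmem : t ∈ Icc (0:ℝ) 1 := Ioc_subset_Icc_self ht
      have hγcw : Continuous fun w : ℂ => γ w t := by
        simp only [hγ]
        exact continuous_const.add ((continuous_id.sub continuous_const).const_smul t)
      have hne0 : f (γ w₀ t) ≠ 0 := hne _ (hmem w₀ hw₀ t htmem)
      exact (continuous_id.sub continuous_const).continuousAt.mul
        (((hdc.comp hγcw).continuousAt).div ((hfc.comp hγcw).continuousAt) hne0)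
  -- differentiability of h on the ball
  refine ⟨h, ?_, hexp⟩
  intro w₀ hw₀
  have hne0 : f w₀ ≠ 0 := hne _ hw₀
  have heq : h =ᶠ[nhds w₀] fun w => h w₀ + Complex.log (f w / f w₀) := by
    have h1 : ∀ᶠ w in nhds w₀, dist (h w) (h w₀) < 1 :=
      (hcont w₀ hw₀).tendsto (Metric.ball_mem_nhds (h w₀) one_pos)
    have h2 : ∀ᶠ w in nhds w₀, w ∈ ball p R := isOpen_ball.mem_nhds hw₀
    filter_upwards [h1, h2] with w hd hwb
    have he : Complex.exp (h w - h w₀) = f w / f w₀ := by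
      rw [Complex.exp_sub, hexp w hwb, hexp w₀ hw₀]
    have him : |(h w - h w₀).im| < 1 := by
      calc |(h w - h w₀).im| ≤ ‖h w - h w₀‖ := Complex.abs_im_le_norm _
        _ < 1 := by rwa [← dist_eq_norm]
    have hπ : (1:ℝ) < Real.pi := lt_trans one_lt_two (by linarith [Real.pi_gt_three])
    have hlog : Complex.log (Complex.exp (h w - h w₀)) = h w - h w₀ :=
      Complex.log_exp (by cases' abs_lt.mp him with h3 h4; linarith)
        (by cases' abs_lt.mp him with h3 h4; linarith)
    rw [he] at hlog
    rw [hlog]; ring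
  have hdAt : DifferentiableAt ℂ (fun w => h w₀ + Complex.log (f w / f w₀)) w₀ := by
    apply DifferentiableAt.const_add
    apply DifferentiableAt.clog ((hf w₀).div_const (f w₀))
    rw [div_self hne0]
    exact Complex.one_mem_slitPlane
  exact ((heq.differentiableAt_iff).mpr hdAt).differentiableWithinAt

set_option maxHeartbeats 1000000 in
/-- Harnack-type inequality via Schwarz lemma. -/
lemma CH.harnack (f : ℂ → ℂ) (hf : Differentiable ℂ f) (p : ℂ) (R : ℝ) (hR : 0 < R)
    (hb : ∀ w ∈ ball p R, Real.exp 1 ≤ ‖f w‖) (q : ℂ) (hq : q ∈ ball p R) :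
    Real.log ‖f p‖ * (R - dist q p) ≤ Real.log ‖f q‖ * (R + dist q p) := by
  have hne : ∀ w ∈ ball p R, f w ≠ 0 := by
    intro w hw h0
    have := hb w hw
    rw [h0, norm_zero] at this
    linarith [Real.exp_pos 1]
  obtain ⟨h, hdiff, hexp⟩ := CH.exists_log f hf p R hR hne
  have hre : ∀ w ∈ ball p R, (h w).re = Real.log ‖f w‖ := by
    intro w hw
    rw [← hexp w hw, Complex.norm_exp, Real.log_exp]
  have hre1 : ∀ w ∈ ball p R, 1 ≤ (h w).re := by
    intro w hw
    rw [hre w hw]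
    calc (1:ℝ) = Real.log (Real.exp 1) := (Real.log_exp 1).symm
      _ ≤ Real.log ‖f w‖ := Real.log_le_log (Real.exp_pos 1) (hb w hw)
  set a := h p with ha
  have hpmem : p ∈ ball p R := mem_ball_self hR
  set φ : ℂ → ℂ := fun w => (h w - a) / (h w + (starRingEnd ℂ) a) with hφ
  have hiden : ∀ z : ℂ, ‖z - a‖^2 + 4 * z.re * a.re = ‖z + (starRingEnd ℂ) a‖^2 := by
    intro z
    have e1 : ‖z - a‖^2 = Complex.normSq (z - a) := by
      rw [Complex.sq_norm]
    have e2 : ‖z + (starRingEnd ℂ) a‖^2 = Complex.normSq (z + (starRingEnd ℂ) a) := by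
      rw [Complex.sq_norm]
    rw [e1, e2]
    simp only [Complex.normSq_apply, Complex.sub_re, Complex.sub_im, Complex.add_re,
      Complex.add_im, Complex.conj_re, Complex.conj_im]
    ring
  have hden2 : ∀ w ∈ ball p R, 2 ≤ (h w + (starRingEnd ℂ) a).re := by
    intro w hw
    rw [Complex.add_re, Complex.conj_re]
    linarith [hre1 w hw, hre1 p hpmem]
  have hdne : ∀ w ∈ ball p R, h w + (starRingEnd ℂ) a ≠ 0 := by
    intro w hw h0
    have := hden2 w hw
    rw [h0, Complex.zero_re] at this
    linarith
  have hmaps : MapsTo φ (ball p R) (ball 0 1) := by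
    intro w hw
    rw [mem_ball, dist_zero_right, hφ]
    have hdenpos : 0 < ‖h w + (starRingEnd ℂ) a‖ := norm_pos_iff.mpr (hdne w hw)
    rw [norm_div, div_lt_one hdenpos]
    have h4 : (4:ℝ) ≤ 4 * (h w).re * a.re := by
      have h1 := hre1 w hw
      have h2 := hre1 p hpmem
      rw [← ha] at h2
      nlinarith
    have := hiden (h w)
    refine lt_of_pow_lt_pow_left₀ 2 (norm_nonneg _) ?_
    nlinarith [this]
  have hφ0 : φ p = 0 := by simp [hφ, ha]
  have hφd : DifferentiableOn ℂ φ (ball p R) :=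
    (hdiff.sub (differentiableOn_const a)).div
      (hdiff.add (differentiableOn_const _)) hdne
  have hmaps' : MapsTo φ (ball p R) (ball (φ p) 1) := by rwa [hφ0]
  have hSch := Complex.dist_le_div_mul_dist_of_mapsTo_ball hφd (hmaps'.mono_right ball_subset_closedBall) hq
  rw [hφ0, dist_zero_right] at hSch
  -- ‖φ q‖ ≤ 1/R * dist q p
  set d := dist q p with hd
  have hd0 : 0 ≤ d := dist_nonneg
  have hdR : d < R := mem_ball.mp hq
  set α := (a).re with hα
  set β := (h q).re with hβ
  have hα1 : 1 ≤ α := hre1 p hpmem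
  have hβ1 : 1 ≤ β := hre1 q hq
  have hN : ‖h q - a‖ ≤ (d / R) * ‖h q + (starRingEnd ℂ) a‖ := by
    have hdenpos : 0 < ‖h q + (starRingEnd ℂ) a‖ := norm_pos_iff.mpr (hdne q hq)
    have : ‖φ q‖ = ‖h q - a‖ / ‖h q + (starRingEnd ℂ) a‖ := by rw [hφ, norm_div]
    rw [this] at hSch
    rw [div_le_iff₀ hdenpos] at hSch
    calc ‖h q - a‖ ≤ 1 / R * d * ‖h q + (starRingEnd ℂ) a‖ := hSch
      _ = (d / R) * ‖h q + (starRingEnd ℂ) a‖ := by ring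
  -- squares
  have hNsq : ‖h q - a‖^2 ≤ (d/R)^2 * ‖h q + (starRingEnd ℂ) a‖^2 := by
    have h1 : (0:ℝ) ≤ ‖h q - a‖ := norm_nonneg _
    nlinarith [hN, norm_nonneg (h q + (starRingEnd ℂ) a), div_nonneg hd0 (le_of_lt hR)]
  set γ := (h q).im - a.im with hγ
  have hNval : ‖h q - a‖^2 = (β - α)^2 + γ^2 := by
    rw [Complex.sq_norm, Complex.normSq_apply]
    simp only [Complex.sub_re, Complex.sub_im, hβ, hα, hγ]
    ring
  have hDval : ‖h q + (starRingEnd ℂ) a‖^2 = (β + α)^2 + γ^2 := by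
    rw [Complex.sq_norm, Complex.normSq_apply]
    simp only [Complex.add_re, Complex.add_im, Complex.conj_re, Complex.conj_im, hβ, hα, hγ]
    ring
  rw [hNval, hDval] at hNsq
  -- remove γ and clear denominators
  have hk1 : (d/R)^2 ≤ 1 := by
    have : d/R < 1 := (div_lt_one hR).mpr hdR
    nlinarith [div_nonneg hd0 (le_of_lt hR)]
  have h3 : (β - α)^2 * R^2 ≤ d^2 * (β + α)^2 := by
    have hRne : R ≠ 0 := ne_of_gt hR
    have h4 : (β - α)^2 ≤ (d/R)^2 * (β + α)^2 := by nlinarith [hNsq, hk1, sq_nonneg γ]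
    have h5 := mul_le_mul_of_nonneg_right h4 (sq_nonneg R)
    calc (β - α)^2 * R^2 ≤ (d/R)^2 * (β + α)^2 * R^2 := h5
      _ = d^2 * (β + α)^2 := by field_simp
  -- conclude
  have hrep : Real.log ‖f p‖ = α := by rw [hα, ha, hre p hpmem]
  have hreq : Real.log ‖f q‖ = β := by rw [hβ, hre q hq]
  rw [hrep, hreq]
  have hRHS : 0 ≤ d * (α + β) := mul_nonneg hd0 (by linarith)
  rcases le_or_gt (R * (α - β)) 0 with hL | hL
  · have hαβ : α ≤ β := by nlinarith
    have p1 : α * (R - d) ≤ β * (R - d) :=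
      mul_le_mul_of_nonneg_right hαβ (by linarith)
    have p2 : β * (R - d) ≤ β * (R + d) := by nlinarith
    linarith
  · have hsq : (R * (α - β))^2 ≤ (d * (α + β))^2 := by
      calc (R * (α - β))^2 = (β - α)^2 * R^2 := by ring
        _ ≤ d^2 * (β + α)^2 := h3
        _ = (d * (α + β))^2 := by ring
    have hfin : R * (α - β) ≤ d * (α + β) := by
      by_contra hcon
      push_neg at hcon
      have := mul_self_lt_mul_self hRHS hcon
      nlinarith [hsq, this]
    nlinarith [hfin]

/-- If `‖f q‖ ≤ e` and `w` is within `1/(15C)` of `q`, then `‖f w‖ ≤ e + 1`. -/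
lemma CH.grow (f : ℂ → ℂ) (hf : Differentiable ℂ f) (C : ℝ) (hCpos : 0 < C)
    (hC' : ∀ z, ‖deriv f z‖ ≤ C * (1 + ‖f z‖^2)) (q w : ℂ)
    (hq : ‖f q‖ ≤ Real.exp 1) (hw : ‖w - q‖ ≤ 1 / (15 * C)) :
    ‖f w‖ ≤ Real.exp 1 + 1 := by
  set E := Real.exp 1 with hE
  have hE0 : 0 < E := Real.exp_pos 1
  have hE3 : E < 2.72 := lt_trans Real.exp_one_lt_d9 (by norm_num)
  set g : ℝ → ℂ := fun t => f (q + t • (w - q)) with hg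
  have hgd : ∀ t : ℝ, HasDerivAt g ((w - q) • deriv f (q + t • (w - q))) t := by
    intro t
    have h1 : HasDerivAt (fun t : ℝ => q + t • (w - q)) (w - q) t := by
      have := (hasDerivAt_id t).smul_const (w - q)
      simpa using this.const_add q
    exact ((hf _).hasDerivAt).scomp t h1
  set S := {t : ℝ | t ∈ Icc (0:ℝ) 1 ∧ ∀ s ∈ Icc (0:ℝ) t, ‖g s‖ ≤ E + 1} with hS
  have h0S : (0:ℝ) ∈ S := by
    refine ⟨⟨le_refl 0, zero_le_one⟩, fun s hs => ?_⟩
    have hs0 : s = 0 := le_antisymm hs.2 hs.1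
    rw [hs0]
    have : g 0 = f q := by simp [hg]
    rw [this]
    linarith
  have hSb : BddAbove S := ⟨1, fun t ht => ht.1.2⟩
  set T := sSup S with hT
  have hT0 : 0 ≤ T := le_csSup hSb h0S
  have hT1 : T ≤ 1 := csSup_le ⟨0, h0S⟩ fun t ht => ht.1.2
  have hTS : ∀ s, 0 ≤ s → s ≤ T → ‖g s‖ ≤ E + 1 := by
    intro s hs0 hsT
    rcases eq_or_lt_of_le hsT with hseq | hlt
    · rw [hseq]
      rcases eq_or_lt_of_le hT0 with h0T | h0T
      · rw [← h0T]
        exact h0S.2 0 ⟨le_refl 0, le_refl 0⟩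
      by_contra hcon
      push_neg at hcon
      have hcg : ContinuousAt (fun u => ‖g u‖) T := ((hgd T).continuousAt).norm
      have hev : ∀ᶠ u in nhds T, E + 1 < ‖g u‖ := hcg.eventually_const_lt hcon
      rw [Metric.eventually_nhds_iff] at hev
      obtain ⟨δ, hδpos, hδ⟩ := hev
      have hεpos : 0 < min δ T := lt_min hδpos h0T
      obtain ⟨t, htS, htgt⟩ := exists_lt_of_lt_csSup ⟨0, h0S⟩
        (show T - min δ T / 2 < T by linarith)
      have htle : t ≤ T := le_csSup hSb htS
      have hdist : dist t T < δ := by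
        rw [Real.dist_eq, _root_.abs_of_nonpos (by linarith)]
        have h1 : min δ T ≤ δ := min_le_left _ _
        linarith
      have h2 := hδ hdist
      have h3 := htS.2 t ⟨htS.1.1, le_refl t⟩
      linarith
    · obtain ⟨t, htS, hlt2⟩ := exists_lt_of_lt_csSup ⟨0, h0S⟩ hlt
      exact htS.2 s ⟨hs0, le_of_lt hlt2⟩
  -- derivative bound on Icc 0 T
  have hbound : ∀ s ∈ Icc (0:ℝ) T, ‖(w - q) • deriv f (q + s • (w - q))‖ ≤ 1 := by
    intro s hs
    have hgs := hTS s hs.1 hs.2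
    rw [norm_smul]
    have h1 : ‖deriv f (q + s • (w - q))‖ ≤ C * (1 + ‖g s‖^2) := hC' _
    have h2 : 1 + ‖g s‖^2 ≤ 15 := by nlinarith [norm_nonneg (g s)]
    have h3 : ‖deriv f (q + s • (w - q))‖ ≤ 15 * C := by nlinarith
    have h4 : (0:ℝ) ≤ ‖w - q‖ := norm_nonneg _
    calc ‖w - q‖ * ‖deriv f (q + s • (w - q))‖ ≤ (1/(15*C)) * (15*C) := by
          apply mul_le_mul hw h3 (norm_nonneg _) (by positivity)
      _ = 1 := by field_simp
  have hkey := norm_image_sub_le_of_norm_deriv_le_segment' (C := 1)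
    (f' := fun s => (w - q) • deriv f (q + s • (w - q)))
    (fun s _ => (hgd s).hasDerivWithinAt)
    (fun s hs => hbound s (Ico_subset_Icc_self hs)) T (right_mem_Icc.mpr hT0)
  have hgT : ‖g T‖ ≤ E + T := by
    have hg0 : ‖g 0‖ ≤ E := by
      have h6 : g 0 = f q := by simp [hg]
      rw [h6]; exact hq
    have h4 : ‖g T‖ - ‖g 0‖ ≤ ‖g T - g 0‖ := norm_sub_norm_le _ _
    have h5 : ‖g T - g 0‖ ≤ 1 * (T - 0) := hkey
    linarith
  rcases eq_or_lt_of_le hT1 with hTeq | hTlt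
  · have hgw : g 1 = f w := by simp [hg]
    rw [← hgw]
    rw [hTeq] at hgT
    linarith
  · exfalso
    have hgTlt : ‖g T‖ < E + 1 := by linarith
    have hcg : ContinuousAt (fun u => ‖g u‖) T := ((hgd T).continuousAt).norm
    have hev : ∀ᶠ u in nhds T, ‖g u‖ < E + 1 := hcg.eventually_lt_const hgTlt
    rw [Metric.eventually_nhds_iff] at hev
    obtain ⟨δ, hδpos, hδ⟩ := hev
    set T' := min 1 (T + δ/2) with hT'
    have hT'T : T < T' := lt_min hTlt (by linarith)
    have hT'S : T' ∈ S := by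
      refine ⟨⟨by positivity, min_le_left _ _⟩, fun u hu => ?_⟩
      rcases le_or_gt u T with h | h
      · exact hTS u hu.1 h
      · refine le_of_lt (hδ ?_)
        rw [Real.dist_eq, _root_.abs_of_nonneg (by linarith)]
        have h7 : u ≤ T + δ/2 := le_trans hu.2 (min_le_right _ _)
        linarith
    linarith [le_csSup hSb hT'S]

/-- Where `log ‖f‖` is large, the sublevel set `{‖f‖ ≤ e}` is proportionally far away. -/
lemma CH.far (f : ℂ → ℂ) (hf : Differentiable ℂ f) (C : ℝ) (hCpos : 0 < C)
    (hC' : ∀ z, ‖deriv f z‖ ≤ C * (1 + ‖f z‖^2)) (p w : ℂ)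
    (hp : 8 < Real.log ‖f p‖) (hw : dist p w < Real.log ‖f p‖ / (60 * C)) :
    Real.exp 1 < ‖f w‖ := by
  by_contra hcon
  push_neg at hcon
  set α := Real.log ‖f p‖ with hα
  set Eset := {z : ℂ | ‖f z‖ ≤ Real.exp 1} with hEset
  have hEclosed : IsClosed Eset := isClosed_le hf.continuous.norm continuous_const
  have hEne : Eset.Nonempty := ⟨w, hcon⟩
  obtain ⟨q, hqE, hqd⟩ := hEclosed.exists_infDist_eq_dist hEne p
  set d := infDist p Eset with hd
  have hdle : d ≤ dist p w := infDist_le_dist_of_mem hcon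
  have hdlt : d < α / (60*C) := lt_of_le_of_lt hdle hw
  have hpE : p ∉ Eset := by
    intro hmem
    have hfp : (0:ℝ) < ‖f p‖ := by
      by_contra h0
      push_neg at h0
      have : ‖f p‖ = 0 := le_antisymm h0 (norm_nonneg _)
      rw [hα, this, Real.log_zero] at hp
      linarith
    have h1 : α ≤ 1 := by
      rw [hα]
      calc Real.log ‖f p‖ ≤ Real.log (Real.exp 1) := Real.log_le_log hfp hmem
        _ = 1 := Real.log_exp 1
    linarith
  have hdpos : 0 < d := by
    rcases lt_or_eq_of_le (infDist_nonneg (s := Eset) (x := p)) with h | h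
    · exact h
    · exfalso
      apply hpE
      have : p ∈ closure Eset := (mem_closure_iff_infDist_zero hEne).mpr h.symm
      rwa [hEclosed.closure_eq] at this
  have hball : ∀ u ∈ ball p d, Real.exp 1 ≤ ‖f u‖ := by
    intro u hu
    by_contra h'
    push_neg at h'
    have humem : u ∈ Eset := le_of_lt h'
    have h8 : infDist p Eset ≤ dist p u := infDist_le_dist_of_mem humem
    rw [← hd] at h8
    rw [mem_ball, dist_comm] at hu
    linarith
  set r := min (1/(15*C)) (d/2) with hr
  have hrpos : 0 < r := lt_min (by positivity) (by linarith)
  have hrd : r ≤ d/2 := min_le_right _ _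
  have hdq : dist p q = d := hqd.symm
  set q₁ := q + (↑(r/d) : ℂ) * (p - q) with hq₁
  have hnormpq : ‖p - q‖ = d := by rw [← dist_eq_norm, hdq]
  have hq₁q : ‖q₁ - q‖ = r := by
    rw [hq₁]
    have h1 : q + (↑(r/d) : ℂ) * (p - q) - q = (↑(r/d) : ℂ) * (p - q) := by ring
    rw [h1, norm_mul, Complex.norm_real, Real.norm_eq_abs,
      _root_.abs_of_nonneg (by positivity : (0:ℝ) ≤ r/d), hnormpq]
    field_simp
  have hq₁p : dist q₁ p = d - r := by
    rw [dist_eq_norm, hq₁]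
    have h1 : q + (↑(r/d) : ℂ) * (p - q) - p = ((1 : ℂ) - ↑(r/d)) * (q - p) := by ring
    rw [h1, norm_mul]
    have h2 : ((1:ℂ) - ↑(r/d)) = ((1 - r/d : ℝ) : ℂ) := by push_cast; ring
    rw [h2, Complex.norm_real, Real.norm_eq_abs]
    have h3 : 0 ≤ 1 - r/d := by
      rw [sub_nonneg, div_le_one hdpos]
      linarith
    rw [_root_.abs_of_nonneg h3]
    have h4 : ‖q - p‖ = d := by rw [norm_sub_rev, hnormpq]
    rw [h4]
    field_simp
  have hq₁ball : q₁ ∈ ball p d := by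
    rw [mem_ball, hq₁p]
    linarith
  have hq₁f : ‖f q₁‖ ≤ Real.exp 1 + 1 := by
    apply CH.grow f hf C hCpos hC' q q₁ hqE
    rw [hq₁q]
    exact min_le_left _ _
  set β := Real.log ‖f q₁‖ with hβ
  have hβ1 : 1 ≤ β := by
    rw [hβ]
    calc (1:ℝ) = Real.log (Real.exp 1) := (Real.log_exp 1).symm
      _ ≤ Real.log ‖f q₁‖ := Real.log_le_log (Real.exp_pos 1) (hball q₁ hq₁ball)
  have hβ2 : β ≤ 2 := by
    rw [hβ]
    have h1 : Real.exp 1 + 1 ≤ Real.exp 2 := by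
      have h2 := Real.exp_one_gt_d9
      have h3 : Real.exp 2 = Real.exp 1 * Real.exp 1 := by
        rw [← Real.exp_add]; norm_num
      nlinarith
    calc Real.log ‖f q₁‖ ≤ Real.log (Real.exp 2) := by
          apply Real.log_le_log
          · have := hball q₁ hq₁ball; linarith [Real.exp_pos 1]
          · linarith [hq₁f]
      _ = 2 := Real.log_exp 2
  have hHar := CH.harnack f hf p d hdpos hball q₁ hq₁ball
  rw [hq₁p] at hHar
  rw [← hα, ← hβ] at hHar
  -- hHar : α * (d - (d - r)) ≤ β * (d + (d - r))
  have hαr : α * r ≤ 4 * d := by nlinarith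
  rcases le_or_gt (1/(15*C)) (d/2) with hcase | hcase
  · have hreq : r = 1/(15*C) := min_eq_left hcase
    rw [hreq] at hαr
    have h60 : α / (60*C) ≤ d := by
      rw [div_le_iff₀ (by positivity : (0:ℝ) < 60*C)]
      have h5 : α * (1/(15*C)) ≤ 4*d := hαr
      have h6 : 0 < 15*C := by positivity
      calc α = α * (1/(15*C)) * (15*C) := by field_simp
        _ ≤ 4*d*(15*C) := by
            apply mul_le_mul_of_nonneg_right h5 (le_of_lt h6)
        _ = d * (60*C) := by ring
    linarith
  · have hreq : r = d/2 := min_eq_right (le_of_lt hcase)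
    rw [hreq] at hαr
    have : α ≤ 8 := by nlinarith
    linarith

/-- Clunie–Hayman theorem: a nonconstant entire function with bounded spherical
derivative `f^#(z) = |f'(z)|/(1+|f(z)|²) ≤ C` has order at most one, normal type:
`log(1 + |f(z)|) ≤ C'·|z| + O(1)` for some constant `C'` depending on `C`. -/
theorem clunie_hayman (f : ℂ → ℂ) (hf : Differentiable ℂ f)
    (hnc : ¬ ∃ c : ℂ, f = fun _ => c) (C : ℝ)
    (hC : ∀ z : ℂ, ‖deriv f z‖ / (1 + ‖f z‖ ^ 2) ≤ C) :
    ∃ C' C'' : ℝ, ∀ z : ℂ, Real.log (1 + ‖f z‖) ≤ C' * ‖z‖ + C'' := by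
  have hC' : ∀ z, ‖deriv f z‖ ≤ C * (1 + ‖f z‖^2) := by
    intro z
    have h1 : (0:ℝ) < 1 + ‖f z‖^2 := by positivity
    have h2 := hC z
    rwa [div_le_iff₀ h1] at h2
  rcases le_or_gt C 0 with hCneg | hCpos
  · exfalso
    apply hnc
    have hzero : ∀ z, deriv f z = 0 := by
      intro z
      have h1 := hC' z
      have h2 : (0:ℝ) ≤ 1 + ‖f z‖^2 := by positivity
      have h3 : C * (1 + ‖f z‖^2) ≤ 0 := mul_nonpos_of_nonpos_of_nonneg hCneg h2
      have h4 : ‖deriv f z‖ ≤ 0 := le_trans h1 h3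
      exact norm_le_zero_iff.mp h4
    exact ⟨f 0, funext fun z => is_const_of_deriv_eq_zero hf hzero z 0⟩
  set K := max (max 9 (120*C)) (Real.log ‖f 0‖) with hK
  have hK9 : (9:ℝ) ≤ K := le_trans (le_max_left _ _) (le_max_left _ _)
  have hK120 : 120*C ≤ K := le_trans (le_max_right _ _) (le_max_left _ _)
  have hK0 : Real.log ‖f 0‖ ≤ K := le_max_right _ _
  have key : ∀ n : ℕ, ∀ p : ℂ, ‖p‖ ≤ (n:ℝ) → Real.log ‖f p‖ ≤ K + 120*C*n := by
    intro n
    induction n with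
    | zero =>
      intro p hp
      have hp0 : p = 0 := norm_le_zero_iff.mp (by simpa using hp)
      rw [hp0]
      simpa using hK0
    | succ n ih =>
      intro p hp
      rcases le_or_gt (Real.log ‖f p‖) K with hα | hα
      · have h0 : (0:ℝ) ≤ 120*C*(n+1) := by positivity
        push_cast
        linarith
      set α := Real.log ‖f p‖ with hαdef
      have hα9 : (9:ℝ) < α := lt_of_le_of_lt hK9 hα
      have hα120 : 120*C < α := lt_of_le_of_lt hK120 hα
      rcases le_or_gt ‖p‖ (n:ℝ) with hpn | hpn
      · have h1 := ih p hpn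
        have h2 : (0:ℝ) ≤ 120*C := by positivity
        push_cast
        linarith
      have hppos : 0 < ‖p‖ := lt_of_le_of_lt (Nat.cast_nonneg n) hpn
      set s := min 1 ‖p‖ with hs
      have hs0 : 0 < s := lt_min one_pos hppos
      have hs1 : s ≤ 1 := min_le_left _ _
      have hsp : s ≤ ‖p‖ := min_le_right _ _
      set q := (1 - s/‖p‖) • p with hqdef
      have hqnorm : ‖q‖ = ‖p‖ - s := by
        rw [hqdef, norm_smul, Real.norm_eq_abs]
        have h1 : 0 ≤ 1 - s/‖p‖ := by
          rw [sub_nonneg, div_le_one hppos]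
          exact hsp
        rw [_root_.abs_of_nonneg h1]
        have hpne : ‖p‖ ≠ 0 := ne_of_gt hppos
        rw [sub_mul, one_mul, div_mul_cancel₀ _ hpne]
      have hqp : dist q p = s := by
        rw [dist_eq_norm, hqdef]
        have h1 : (1 - s/‖p‖) • p - p = (-(s/‖p‖)) • p := by
          nth_rewrite 3 [← one_smul ℝ p]
          rw [← sub_smul]
          congr 1
          ring
        rw [h1, norm_smul, Real.norm_eq_abs, abs_neg,
          _root_.abs_of_nonneg (by positivity : (0:ℝ) ≤ s/‖p‖)]
        have hpne : ‖p‖ ≠ 0 := ne_of_gt hppos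
        rw [div_mul_cancel₀ _ hpne]
      have hqn : ‖q‖ ≤ (n:ℝ) := by
        rw [hqnorm]
        rcases le_total ‖p‖ 1 with h | h
        · have : s = ‖p‖ := min_eq_right h
          rw [this]
          simpa using Nat.cast_nonneg n
        · have : s = 1 := min_eq_left h
          rw [this]
          push_cast at hp
          linarith
      set R := α / (60*C) with hR
      have hRpos : 0 < R := div_pos (by linarith) (by positivity)
      have hR2 : 2 < R := by
        rw [hR, lt_div_iff₀ (by positivity : (0:ℝ) < 60*C)]
        linarith
      have hball : ∀ u ∈ ball p R, Real.exp 1 ≤ ‖f u‖ := by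
        intro u hu
        apply le_of_lt
        apply CH.far f hf C hCpos hC' p u (by linarith)
        rw [mem_ball] at hu
        rw [dist_comm]
        exact hu
      have hqball : q ∈ ball p R := by
        rw [mem_ball, hqp]
        linarith
      have hHar := CH.harnack f hf p R hRpos hball q hqball
      rw [hqp] at hHar
      set β := Real.log ‖f q‖ with hβdef
      have hβ0 : (0:ℝ) ≤ β := by
        rw [hβdef]
        calc (0:ℝ) ≤ 1 := zero_le_one
          _ = Real.log (Real.exp 1) := (Real.log_exp 1).symm
          _ ≤ Real.log ‖f q‖ := Real.log_le_log (Real.exp_pos 1) (hball q hqball)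
      have hβn : β ≤ K + 120*C*n := ih q hqn
      have hstep : α ≤ β + 120*C := by
        rcases le_or_gt α β with h | h
        · have : (0:ℝ) ≤ 120*C := by positivity
          linarith
        · -- hHar : α * (R - s) ≤ β * (R + s)
          have hRα : R * (60*C) = α := by
            rw [hR]
            field_simp
          have h1 : (α - β) * (R + s) ≤ 2*s*α := by nlinarith
          have h2 : (α - β) * R ≤ 2*s*α := by nlinarith
          -- (α - β) * R ≤ 2*s*α = 2*s*(R*60C) so α - β ≤ 120*C*s ≤ 120*C
          have h3 : (α - β) * R ≤ (120*C*s) * R := by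
            calc (α - β) * R ≤ 2*s*α := h2
              _ = 2*s*(R*(60*C)) := by rw [hRα]
              _ = (120*C*s) * R := by ring
          have h4 : α - β ≤ 120*C*s := le_of_mul_le_mul_right (by linarith [h3]) hRpos
          have h5 : 120*C*s ≤ 120*C := by nlinarith
          linarith
      push_cast
      linarith
  refine ⟨120*C, Real.log 2 + K + 120*C, ?_⟩
  intro z
  have hn := key (⌈‖z‖⌉₊) z (Nat.le_ceil _)
  have hceil : (⌈‖z‖⌉₊ : ℝ) ≤ ‖z‖ + 1 := by
    have := Nat.ceil_lt_add_one (norm_nonneg z)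
    linarith
  have hmul : 120*C*(⌈‖z‖⌉₊ : ℝ) ≤ 120*C*(‖z‖+1) :=
    mul_le_mul_of_nonneg_left hceil (by positivity)
  have hlog : Real.log ‖f z‖ ≤ K + 120*C*‖z‖ + 120*C := by
    calc Real.log ‖f z‖ ≤ K + 120*C*(⌈‖z‖⌉₊ : ℝ) := hn
      _ ≤ K + 120*C*(‖z‖+1) := by linarith
      _ = K + 120*C*‖z‖ + 120*C := by ring
  have hCz : (0:ℝ) ≤ 120*C*‖z‖ := by positivity
  rcases le_total ‖f z‖ 1 with h1 | h1
  · have h2 : Real.log (1 + ‖f z‖) ≤ Real.log 2 := by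
      apply Real.log_le_log (by positivity)
      linarith
    linarith
  · have h2 : Real.log (1 + ‖f z‖) ≤ Real.log 2 + Real.log ‖f z‖ := by
      rw [← Real.log_mul (by norm_num) (by linarith : ‖f z‖ ≠ 0)]
      apply Real.log_le_log (by positivity)
      linarith
    linarith
end
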